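/- Let X be a compact Hausdorff space with uniformity 𝒰 and f : X → X continuous. Then (X,f) is minimal if and only if for every entourage E ∈ 𝒰 there exist D ∈ 𝒰 and n ∈ ℕ such that every D-pseudo-orbit (x_i)_{i≥0} satisfies B_E({x_0,…,x_n}) = X. -/

import Mathlib

open UniformSpace Set Filter

def omegaLim {X : Type*} [TopologicalSpace X] (f : X → X) (x : X) : Set X :=
  ⋂ N : ℕ, closure {y | ∃ n > N, f^[n] x = y}

lemma shadow_lemma {X : Type*} [UniformSpace X] (f : X → X) (hf : UniformContinuous f) :
    ∀ n : ℕ, ∀ E ∈ uniformity X, ∃ D ∈ uniformity X, ∀ x : ℕ → X,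
      (∀ i, (f (x i), x (i + 1)) ∈ D) → ∀ i ≤ n, (f^[i] (x 0), x i) ∈ E := by
  intro n
  induction n with
  | zero =>
    intro E hE
    refine ⟨E, hE, fun x _ i hi => ?_⟩
    interval_cases i
    simpa using refl_mem_uniformity hE
  | succ n ih =>
    intro E hE
    obtain ⟨H, hH, hHE⟩ := comp_mem_uniformity_sets hE
    have hB : {p : X × X | (f p.1, f p.2) ∈ H} ∈ uniformity X := hf hH
    obtain ⟨D', hD', hD'spec⟩ := ih (E ∩ {p | (f p.1, f p.2) ∈ H}) (inter_mem hE hB)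
    refine ⟨D' ∩ H, inter_mem hD' hH, fun x hx i hi => ?_⟩
    have hx' : ∀ i, (f (x i), x (i + 1)) ∈ D' := fun i => (hx i).1
    rcases Nat.lt_or_ge i (n + 1) with h | h
    · exact (hD'spec x hx' i (Nat.lt_succ_iff.mp h)).1
    · have hi' : i = n + 1 := le_antisymm hi h
      subst hi'
      have h1 : (f (f^[n] (x 0)), f (x n)) ∈ H := (hD'spec x hx' n le_rfl).2
      have h2 : (f (x n), x (n + 1)) ∈ H := (hx n).2
      have h3 : (f (f^[n] (x 0)), x (n + 1)) ∈ SetRel.comp H H := ⟨f (x n), h1, h2⟩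
      have := hHE h3
      simpa [Function.iterate_succ_apply'] using this

theorem minimal_iff_pseudoOrbit_net_uniform {X : Type*} [UniformSpace X] [CompactSpace X]
    [T2Space X] (f : X → X) (hf : Continuous f) :
    (∀ x : X, omegaLim f x = Set.univ) ↔
      ∀ E ∈ uniformity X, ∃ D ∈ uniformity X, ∃ n : ℕ, ∀ x : ℕ → X,
        (∀ i, (f (x i), x (i + 1)) ∈ D) →
        ∀ y : X, ∃ i ≤ n, (x i, y) ∈ E := by
  constructor
  · intro hmin E hE
    obtain ⟨W, hW, hWsymm, hWE⟩ := comp_symm_mem_uniformity_sets hE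
    obtain ⟨E', hE', hE'symm, hE'W⟩ := comp_symm_mem_uniformity_sets hW
    -- cover X by interiors of E'-balls
    have hcov : (univ : Set X) ⊆ ⋃ y : X, interior (ball y E') := fun z _ =>
      mem_iUnion.mpr ⟨z, mem_interior_iff_mem_nhds.mpr (ball_mem_nhds z hE')⟩
    obtain ⟨t, ht⟩ := isCompact_univ.elim_finite_subcover
      (fun y : X => interior (ball y E')) (fun _ => isOpen_interior) hcov
    -- for each center c, a uniform bound on entry time into interior (ball c E')
    have key : ∀ c : X, ∃ m : ℕ, ∀ z : X, ∃ i ≤ m, f^[i] z ∈ interior (ball c E') := by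
      intro c
      have hcovc : (univ : Set X) ⊆ ⋃ i : ℕ, f^[i] ⁻¹' interior (ball c E') := by
        intro z _
        have hc : c ∈ omegaLim f z := by rw [hmin z]; trivial
        have hc0 : c ∈ closure {y | ∃ n > 0, f^[n] z = y} := by
          have := mem_iInter.mp hc 0
          exact this
        have hmem : c ∈ interior (ball c E') :=
          mem_interior_iff_mem_nhds.mpr (ball_mem_nhds c hE')
        obtain ⟨w, hw1, hw2⟩ := mem_closure_iff.mp hc0 _ isOpen_interior hmem
        obtain ⟨k, _, hk⟩ := hw2
        exact mem_iUnion.mpr ⟨k, by simp [hk, hw1]⟩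
      obtain ⟨s, hs⟩ := isCompact_univ.elim_finite_subcover
        (fun i : ℕ => f^[i] ⁻¹' interior (ball c E'))
        (fun i => isOpen_interior.preimage (hf.iterate i)) hcovc
      refine ⟨s.sup id, fun z => ?_⟩
      obtain ⟨i, his, hiz⟩ := mem_iUnion₂.mp (hs (mem_univ z))
      exact ⟨i, Finset.le_sup (f := id) his, hiz⟩
    choose m hm using key
    set n := t.sup m with hn
    obtain ⟨D, hD, hDspec⟩ :=
      shadow_lemma f (CompactSpace.uniformContinuous_of_continuous hf) n E' hE'
    refine ⟨D, hD, n, fun x hx y => ?_⟩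
    obtain ⟨c, hct, hyc⟩ := mem_iUnion₂.mp (ht (mem_univ y))
    obtain ⟨i, him, hfi⟩ := hm c (x 0)
    have hin : i ≤ n := him.trans (Finset.le_sup hct)
    refine ⟨i, hin, ?_⟩
    have h1 : (f^[i] (x 0), x i) ∈ E' := hDspec x hx i hin
    have h2 : (c, f^[i] (x 0)) ∈ E' := (interior_subset hfi : f^[i] (x 0) ∈ ball c E')
    have h3 : (c, y) ∈ E' := (interior_subset hyc : y ∈ ball c E')
    have hxc : (x i, c) ∈ W :=
      hE'W ⟨f^[i] (x 0), hE'symm.symm _ _ h1, hE'symm.symm _ _ h2⟩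
    have hcy : (c, y) ∈ W := hE'W ⟨c, refl_mem_uniformity hE', h3⟩
    exact hWE ⟨c, hxc, hcy⟩
  · intro h x
    ext y
    simp only [mem_univ, iff_true]
    rw [omegaLim]
    refine mem_iInter.mpr fun N => ?_
    rw [mem_closure_iff_ball]
    intro V hV
    obtain ⟨V', hV', hV'symm, hV'V⟩ := comp_symm_mem_uniformity_sets hV
    obtain ⟨D, hD, n, hspec⟩ := h V' hV'
    have horb : ∀ i, (f ((fun i => f^[N + 1 + i] x) i), (fun i => f^[N + 1 + i] x) (i + 1)) ∈ D := by
      intro i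
      show (f (f^[N + 1 + i] x), f^[N + 1 + (i + 1)] x) ∈ D
      have he : N + 1 + (i + 1) = (N + 1 + i) + 1 := by ring
      rw [he, Function.iterate_succ_apply']
      exact refl_mem_uniformity hD
    obtain ⟨i, _, hi⟩ := hspec _ horb y
    refine ⟨f^[N + 1 + i] x, ?_, ⟨N + 1 + i, by omega, rfl⟩⟩
    exact hV'V ⟨f^[N + 1 + i] x, hV'symm.symm _ _ hi, refl_mem_uniformity hV'⟩
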